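/- On ℝ^8 = ℝ^7 ⊕ span(e₈), define σ₁ = ω₁ + e^{58} − e^{67}, σ₂ = ω₂ + e^{68} − e^{75}, σ₃ = ω₃ + e^{78} − e^{56}, with ω_s as above. Then ½(σ₁² + σ₂² + σ₃²) = α∧e^8 + β, where α and β are the standard SO(4)-forms on ℝ^7. -/
import Mathlib


/- STATEMENT 3: On ℝ^8, with σ₁, σ₂, σ₃ as in (3.2),
   ½(σ₁² + σ₂² + σ₃²) = α ∧ e^8 + β. -/

noncomputable section

/-- `E i` is the basis covector `e^{i+1}` of `(ℝ^8)^*` inside the exterior algebra. -/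
def E (i : Fin 8) : ExteriorAlgebra ℝ (Fin 8 → ℝ) :=
  ExteriorAlgebra.ι ℝ (Pi.single i 1)

def σ₁ : ExteriorAlgebra ℝ (Fin 8 → ℝ) :=
  E 0 * E 1 - E 2 * E 3 + E 4 * E 7 - E 5 * E 6
def σ₂ : ExteriorAlgebra ℝ (Fin 8 → ℝ) :=
  E 0 * E 2 - E 3 * E 1 + E 5 * E 7 - E 6 * E 4
def σ₃ : ExteriorAlgebra ℝ (Fin 8 → ℝ) :=
  E 0 * E 3 - E 1 * E 2 + E 6 * E 7 - E 4 * E 5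

/-- `α = ω₁∧e^5 + ω₂∧e^6 + ω₃∧e^7 − 3 e^{567}` (0-based indices). -/
def α : ExteriorAlgebra ℝ (Fin 8 → ℝ) :=
  (E 0 * E 1 - E 2 * E 3) * E 4 + (E 0 * E 2 - E 3 * E 1) * E 5
    + (E 0 * E 3 - E 1 * E 2) * E 6 - (3:ℝ) • (E 4 * E 5 * E 6)

/-- `β = −ω₁∧e^{67} − ω₂∧(e^7∧e^5) − ω₃∧e^{56} − 3 e^{1234}`. -/
def β : ExteriorAlgebra ℝ (Fin 8 → ℝ) :=
  -((E 0 * E 1 - E 2 * E 3) * (E 5 * E 6))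
    - (E 0 * E 2 - E 3 * E 1) * (E 6 * E 4)
    - (E 0 * E 3 - E 1 * E 2) * (E 4 * E 5)
    - (3:ℝ) • (E 0 * E 1 * E 2 * E 3)


lemma E_swap (i j : Fin 8) : E i * E j = -(E j * E i) := by
  have h := ExteriorAlgebra.ι_add_mul_swap (R := ℝ) (Pi.single i (1:ℝ) : Fin 8 → ℝ)
    (Pi.single j 1)
  unfold E
  linear_combination (norm := noncomm_ring) h

lemma E_sq (i : Fin 8) : E i * E i = 0 := ExteriorAlgebra.ι_sq_zero _

lemma E_swap' (i j : Fin 8) (x : ExteriorAlgebra ℝ (Fin 8 → ℝ)) :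
    E i * (E j * x) = -(E j * (E i * x)) := by
  rw [← mul_assoc, E_swap, ← mul_assoc, neg_mul]

lemma E_sq' (i : Fin 8) (x : ExteriorAlgebra ℝ (Fin 8 → ℝ)) : E i * (E i * x) = 0 := by
  rw [← mul_assoc, E_sq, zero_mul]

lemma E_swap_lt (i j : Fin 8) (_h : j < i) (x : ExteriorAlgebra ℝ (Fin 8 → ℝ)) :
    E i * (E j * x) = -(E j * (E i * x)) := E_swap' i j x

lemma E_swap_lt' (i j : Fin 8) (_h : j < i) : E i * E j = -(E j * E i) := E_swap i j

theorem half_sum_sigma_sq_eq_alpha_wedge_e8_add_beta :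
    (1/2 : ℝ) • (σ₁ * σ₁ + σ₂ * σ₂ + σ₃ * σ₃) = α * E 7 + β := by
  simp only [σ₁, σ₂, σ₃, α, β, sub_eq_add_neg, mul_add, add_mul, mul_neg, neg_mul,
    neg_neg, mul_assoc, smul_add, smul_neg, smul_mul_assoc, neg_add_rev]
  simp (config := { decide := true }) only [E_swap_lt, E_swap_lt', E_sq, E_sq',
    mul_neg, neg_mul, neg_neg, mul_zero, zero_mul, neg_zero, smul_neg, smul_zero]
  module

end
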